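/- Let (G, τ) be a Hausdorff topological group with S = S(G,τ) the set of sequences converging to the identity. Then τ_S is the finest Hausdorff group topology on G all of whose open sets are sequentially open in τ. -/

import Mathlib

open Filter Topology Pointwise

/-- `u` converges to the identity in the group topology `t`. -/
def TendstoOne {G : Type*} [Group G] (t : GroupTopology G) (u : ℕ → G) : Prop :=
  Filter.Tendsto u Filter.atTop (@nhds G t.toTopologicalSpace 1)

/-- The group topology `t` is Hausdorff. -/
def IsHausdorffGT {G : Type*} [Group G] (t : GroupTopology G) : Prop :=
  @T2Space G t.toTopologicalSpace

/-- `S` is a `T_s`-set of sequences: some Hausdorff group topology makes every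
sequence of `S` converge to the identity. -/
def IsTsSet {G : Type*} [Group G] (S : Set (ℕ → G)) : Prop :=
  ∃ t : GroupTopology G, IsHausdorffGT t ∧ ∀ u ∈ S, TendstoOne t u

/-- `τ` is the finest Hausdorff group topology on `G` in which every sequence of `S`
converges to the identity (recall that in Mathlib's order on topologies, finer = smaller). -/
def IsTauS {G : Type*} [Group G] (S : Set (ℕ → G)) (τ : GroupTopology G) : Prop :=
  IsHausdorffGT τ ∧ (∀ u ∈ S, TendstoOne τ u) ∧
    ∀ t : GroupTopology G, IsHausdorffGT t → (∀ u ∈ S, TendstoOne t u) → τ ≤ t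

/-- The given topological-group structure on `G`, as a term of `GroupTopology G`. -/
def ambientGT (G : Type*) [Group G] [τ : TopologicalSpace G] [h : IsTopologicalGroup G] :
    GroupTopology G := ⟨τ, h⟩

/-- The set of all sequences converging to the identity in a group topology. -/
def SeqConvOne {G : Type*} [Group G] (t : GroupTopology G) : Set (ℕ → G) :=
  {u | TendstoOne t u}

/-- `(G, τ)` is an `s`-group: its topology is the finest Hausdorff group topology in which
every member of some `T_s`-set of sequences converges to the identity. -/
def IsSGroup (G : Type*) [Group G] [TopologicalSpace G] [IsTopologicalGroup G] [T2Space G] :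
    Prop :=
  ∃ S : Set (ℕ → G), IsTauS S (ambientGT G)

/-- `U` is sequentially open with respect to the topology `τ`: every sequence converging to a
point of `U` is eventually in `U`. -/
def SeqOpenIn {X : Type*} (τ : TopologicalSpace X) (U : Set X) : Prop :=
  ∀ (x : X) (u : ℕ → X), x ∈ U → Filter.Tendsto u Filter.atTop (@nhds X τ x) →
    ∀ᶠ n in Filter.atTop, u n ∈ U


lemma seqopen_of_tendsto {G : Type*} [Group G] [τ : TopologicalSpace G] [IsTopologicalGroup G]
    (t : GroupTopology G) (ht : ∀ u ∈ SeqConvOne (ambientGT G), TendstoOne t u) :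
    ∀ U : Set G, @IsOpen G t.toTopologicalSpace U → SeqOpenIn τ U := by
  intro U hU x u hx hux
  have hv : Filter.Tendsto (fun n => u n * x⁻¹) Filter.atTop (𝓝 1) := by
    have := hux.mul (tendsto_const_nhds (α := ℕ) (x := x⁻¹))
    simpa using this
  have hv' : TendstoOne t (fun n => u n * x⁻¹) := ht _ hv
  letI := t.toTopologicalSpace
  haveI : IsTopologicalGroup G := t.toIsTopologicalGroup
  have hux' : Filter.Tendsto u Filter.atTop (@nhds G t.toTopologicalSpace x) := by
    have := hv'.mul (tendsto_const_nhds (α := ℕ) (x := x))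
    simpa using this
  exact hux' (hU.mem_nhds hx)

lemma tendsto_of_seqopen {G : Type*} [Group G] [τ : TopologicalSpace G] [IsTopologicalGroup G]
    (t : GroupTopology G) (h : ∀ U : Set G, @IsOpen G t.toTopologicalSpace U → SeqOpenIn τ U) :
    ∀ u ∈ SeqConvOne (ambientGT G), TendstoOne t u := by
  intro u hu
  letI := t.toTopologicalSpace
  rw [TendstoOne, tendsto_nhds]
  intro s hs h1
  exact h s hs 1 u h1 hu

/-- for a Hausdorff topological group `(G, τ)` with `S = S(G, τ)`, the topology
`τ_S` is the finest Hausdorff group topology on `G` all of whose open sets are sequentially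
open in `τ` (recall that in Mathlib's order on `GroupTopology`, finer = smaller). -/
theorem stmt13 {G : Type*} [Group G] [τ : TopologicalSpace G] [IsTopologicalGroup G] [T2Space G]
    (τS : GroupTopology G) (hτS : IsTauS (SeqConvOne (ambientGT G)) τS) :
    IsHausdorffGT τS ∧
      (∀ U : Set G, @IsOpen G τS.toTopologicalSpace U → SeqOpenIn τ U) ∧
      ∀ t : GroupTopology G, IsHausdorffGT t →
        (∀ U : Set G, @IsOpen G t.toTopologicalSpace U → SeqOpenIn τ U) → τS ≤ t := by
  refine ⟨hτS.1, seqopen_of_tendsto τS hτS.2.1, fun t ht hseq =>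
    hτS.2.2 t ht (tendsto_of_seqopen t hseq)⟩
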